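/- Let K > 0, C, A, B be real constants with A and B not both zero, set ε* := 2π e^C/(A² + B²), and let Φ : ℝ → ℝ be a twice continuously differentiable function satisfying Φ''(s) = ε* e^{-Φ(s)/K} for all s. Let a : ℝ → ℝ be differentiable. Define ρ(t,x,y) := (1/a(t)²) e^{-Φ((Ax+By)/a(t))/K + C} and the potential φ(t,x,y) := Φ((Ax+By)/a(t)). Then at every point (t,x,y) with a(t) ≠ 0, the Poisson equation Δφ(t,x,y) = 2π ρ(t,x,y) holds, where Δ is the Laplacian in the spatial variables (x,y). -/

import Mathlib

lemma second_deriv_comp_linear (Φ : ℝ → ℝ) (hΦ : ContDiff ℝ 2 Φ)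
    (l : ℝ → ℝ) (m : ℝ) (hl : ∀ s, HasDerivAt l m s) (x : ℝ) :
    deriv (fun x' => deriv (fun x'' => Φ (l x'')) x') x
      = deriv (deriv Φ) (l x) * m ^ 2 := by
  have hΦ1 : Differentiable ℝ Φ := (hΦ.of_le one_le_two).differentiable one_ne_zero
  have hΦ2 : Differentiable ℝ (deriv Φ) := by
    have h2 : ContDiff ℝ ((1 : ℕ∞) + 1) Φ := by exact_mod_cast hΦ
    exact (contDiff_succ_iff_deriv.mp h2).2.2.differentiable (by simp)
  have h1 : (fun x' => deriv (fun x'' => Φ (l x'')) x') = fun x' => deriv Φ (l x') * m :=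
    funext fun s => (((hΦ1 (l s)).hasDerivAt).comp s (hl s)).deriv
  rw [h1]
  have h2 : HasDerivAt (fun x' => deriv Φ (l x') * m) (deriv (deriv Φ) (l x) * m * m) x :=
    ((((hΦ2 (l x)).hasDerivAt).comp x (hl x))).mul_const m
  rw [h2.deriv]; ring

/-- With `ε* = 2π e^C/(A² + B²)` and `Φ` a C² solution of
`Φ'' = ε* e^{-Φ/K}`, the potential `φ(t,x,y) = Φ((Ax+By)/a(t))` and the
density `ρ(t,x,y) = (1/a(t)²) e^{-Φ((Ax+By)/a(t))/K + C}` satisfy the Poisson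
equation `Δφ = 2πρ` (spatial Laplacian) wherever `a(t) ≠ 0`. -/
theorem poisson_equation_separable
    (K C A B : ℝ) (hK : 0 < K) (hAB : ¬(A = 0 ∧ B = 0))
    (ε : ℝ) (hε : ε = 2 * Real.pi * Real.exp C / (A ^ 2 + B ^ 2))
    (Φ : ℝ → ℝ) (hΦ : ContDiff ℝ 2 Φ)
    (hODE : ∀ s : ℝ, deriv (deriv Φ) s = ε * Real.exp (-Φ s / K))
    (a : ℝ → ℝ) (ha : Differentiable ℝ a)
    (ρ : ℝ → ℝ → ℝ → ℝ)
    (hρ : ρ = fun t x y =>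
      (1 / (a t) ^ 2) * Real.exp (-Φ ((A * x + B * y) / a t) / K + C))
    (φ : ℝ → ℝ → ℝ → ℝ)
    (hφ : φ = fun t x y => Φ ((A * x + B * y) / a t)) :
    ∀ t x y : ℝ, a t ≠ 0 →
      deriv (fun x' => deriv (fun x'' => φ t x'' y) x') x
        + deriv (fun y' => deriv (fun y'' => φ t x y'') y') y
        = 2 * Real.pi * ρ t x y := by
  subst hρ hφ
  intro t x y hc
  have hABpos : (0:ℝ) < A ^ 2 + B ^ 2 := by
    push_neg at hAB
    rcases eq_or_ne A 0 with h | h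
    · have hB := hAB h; positivity
    · positivity
  have hlx : ∀ s : ℝ, HasDerivAt (fun x'' => (A * x'' + B * y) / a t) (A / a t) s := by
    intro s
    simpa using (((hasDerivAt_id s).const_mul A).add_const (B * y)).div_const (a t)
  have hly : ∀ s : ℝ, HasDerivAt (fun y'' => (A * x + B * y'') / a t) (B / a t) s := by
    intro s
    simpa using (((hasDerivAt_id s).const_mul B).const_add (A * x)).div_const (a t)
  rw [second_deriv_comp_linear Φ hΦ _ _ hlx x, second_deriv_comp_linear Φ hΦ _ _ hly y]
  simp only [hODE, hε]
  rw [Real.exp_add]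
  field_simp
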